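/- Let K be the field of rational functions in two variables u, v over ℚ (the fraction field of the polynomial ring ℚ[u,v]). Let b, c be positive integers with b·c ≥ 4, and suppose x : ℤ → K satisfies x(1) = u, x(2) = v, x(i) ≠ 0 for all i ∈ ℤ, and x(i−1)·x(i+1) = x(i)^b + 1 for odd i and x(i−1)·x(i+1) = x(i)^c + 1 for even i. Then x is injective: the cluster variables x(i) are pairwise distinct. (This is the infinite-type half of the rank-2 classification.) -/

import Mathlib

noncomputable section Rank2Aux

open HahnSeries MvPolynomial

abbrev R2A := MvPolynomial (Fin 2) ℚ
abbrev R2K := FractionRing R2A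
abbrev R2F := RatFunc ℚ
abbrev R2L := LaurentSeries R2F

def r2e : R2A ≃+* Polynomial (Polynomial ℚ) :=
  (MvPolynomial.finSuccEquiv ℚ 1).toRingEquiv.trans
    (Polynomial.mapEquiv ((MvPolynomial.finSuccEquiv ℚ 0).toRingEquiv.trans
      (Polynomial.mapEquiv (MvPolynomial.isEmptyRingEquiv ℚ (Fin 0)) : _ ≃+* Polynomial ℚ)))

/-- base injective hom `ℚ[u,v] → ℚ(X)((t))`, u ↦ t, v ↦ X -/
def r2g : R2A →+* R2L :=
  ((algebraMap (Polynomial R2F) R2L).comp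
    (Polynomial.mapRingHom (algebraMap (Polynomial ℚ) R2F))).comp r2e.toRingHom

lemma r2g_inj : Function.Injective r2g := by
  unfold r2g
  simp only [RingHom.coe_comp, RingEquiv.toRingHom_eq_coe, RingEquiv.coe_toRingHom,
    Polynomial.coe_mapRingHom]
  exact ((Polynomial.algebraMap_hahnSeries_injective ℤ).comp
    (Polynomial.map_injective _ (IsFractionRing.injective (Polynomial ℚ) R2F))).comp
    r2e.injective

lemma r2g_X0 : r2g (X 0) = HahnSeries.single (1 : ℤ) (1 : R2F) := by
  have h1 : r2e (X 0) = Polynomial.X := by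
    simp [r2e, MvPolynomial.finSuccEquiv_X_zero]
  simp only [r2g, RingHom.comp_apply, RingEquiv.toRingHom_eq_coe, RingEquiv.coe_toRingHom, h1,
    Polynomial.coe_mapRingHom, Polynomial.map_X, Polynomial.algebraMap_hahnSeries_apply,
    Polynomial.coe_X, HahnSeries.ofPowerSeries_X]

lemma r2g_X1 : r2g (X 1) = HahnSeries.C (RatFunc.X : R2F) := by
  have h0 : (X 1 : R2A) = X (Fin.succ 0) := rfl
  have h1 : r2e (X 1) = Polynomial.C Polynomial.X := by
    simp [r2e, h0, MvPolynomial.finSuccEquiv_X_succ, MvPolynomial.finSuccEquiv_X_zero]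
  simp only [r2g, RingHom.comp_apply, RingEquiv.toRingHom_eq_coe, RingEquiv.coe_toRingHom, h1,
    Polynomial.coe_mapRingHom, Polynomial.map_C, Polynomial.algebraMap_hahnSeries_apply,
    Polynomial.coe_C, HahnSeries.ofPowerSeries_C, RatFunc.algebraMap_X]


/-- variable-swapped version of `r2g`: u ↦ X, v ↦ t -/
def r2gs : R2A →+* R2L :=
  r2g.comp (MvPolynomial.renameEquiv ℚ (Equiv.swap (0 : Fin 2) 1)).toRingEquiv.toRingHom

lemma r2gs_inj : Function.Injective r2gs := by
  unfold r2gs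
  simp only [RingHom.coe_comp, RingEquiv.toRingHom_eq_coe, RingEquiv.coe_toRingHom]
  exact r2g_inj.comp (RingEquiv.injective _)

lemma r2gs_X0 : r2gs (X 0) = HahnSeries.C (RatFunc.X : R2F) := by
  have h : (MvPolynomial.renameEquiv ℚ (Equiv.swap (0 : Fin 2) 1)) (X 0) = X 1 := by
    simp [MvPolynomial.renameEquiv_apply, MvPolynomial.rename_X]
  unfold r2gs
  simp only [RingHom.comp_apply, RingEquiv.toRingHom_eq_coe, RingEquiv.coe_toRingHom]
  rw [show ((MvPolynomial.renameEquiv ℚ (Equiv.swap (0 : Fin 2) 1)).toRingEquiv : R2A → R2A) (X 0)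
    = X 1 from h, r2g_X1]

lemma r2gs_X1 : r2gs (X 1) = HahnSeries.single (1:ℤ) (1:R2F) := by
  have h : (MvPolynomial.renameEquiv ℚ (Equiv.swap (0 : Fin 2) 1)) (X 1) = X 0 := by
    simp [MvPolynomial.renameEquiv_apply, MvPolynomial.rename_X]
  unfold r2gs
  simp only [RingHom.comp_apply, RingEquiv.toRingHom_eq_coe, RingEquiv.coe_toRingHom]
  rw [show ((MvPolynomial.renameEquiv ℚ (Equiv.swap (0 : Fin 2) 1)).toRingEquiv : R2A → R2A) (X 1)
    = X 0 from h, r2g_X0]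

namespace R2

variable {F : Type*} [Field F]

lemma hs_order_add_left {f g : HahnSeries ℤ F} (hf : f ≠ 0) (hlt : f.order < g.order) :
    (f + g).order = f.order ∧ (f + g).coeff f.order = f.coeff f.order := by
  have hco : g.coeff f.order = 0 := by
    by_cases hg : g = 0
    · simp [hg]
    · exact coeff_eq_zero_of_lt_order hlt
  have hcoeff : (f + g).coeff f.order = f.coeff f.order := by
    simp [HahnSeries.coeff_add, hco]
  have hne : (f + g).coeff f.order ≠ 0 := by
    rw [hcoeff]; exact fun h => hf (coeff_order_eq_zero.1 h)
  have hfg : f + g ≠ 0 := fun h => hne (by simp [h])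
  constructor
  · refine le_antisymm (order_le_of_coeff_ne_zero hne) ?_
    have h2 := min_order_le_order_add hfg
    rwa [min_eq_left hlt.le] at h2
  · exact hcoeff

lemma hs_order_npow {f : HahnSeries ℤ F} (n : ℕ) :
    (f ^ n).order = n * f.order := by
  rw [order_pow]; simp [zsmul_eq_mul]

lemma hs_order_pow_add_one_neg {f : HahnSeries ℤ F} (hf : f ≠ 0) (ho : f.order < 0) (n : ℕ)
    (hn : 1 ≤ n) : (f ^ n + 1).order = n * f.order := by
  have hfn : f ^ n ≠ 0 := pow_ne_zero _ hf
  have h1 : (f ^ n).order = n * f.order := hs_order_npow n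
  have : (f ^ n).order < (1 : HahnSeries ℤ F).order := by
    rw [h1, order_one]
    have : (0:ℤ) < n := by exact_mod_cast hn
    exact mul_neg_of_pos_of_neg this ho
  have := hs_order_add_left hfn this
  rw [this.1, h1]

lemma hs_order_pow_add_one_pos {f : HahnSeries ℤ F} (hf : f ≠ 0) (ho : 0 < f.order) (n : ℕ)
    (hn : 1 ≤ n) :
    (f ^ n + 1).order = 0 ∧ (f ^ n + 1).coeff 0 = 1 := by
  have hfn : f ^ n ≠ 0 := pow_ne_zero _ hf
  have h1 : (f ^ n).order = n * f.order := hs_order_npow n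
  have hlt : (1 : HahnSeries ℤ F).order < (f ^ n).order := by
    rw [h1, order_one]; positivity
  have h2 := hs_order_add_left (f := 1) (g := f ^ n) one_ne_zero hlt
  rw [add_comm (f ^ n) 1]
  rw [order_one] at h2
  exact ⟨h2.1, by rw [h2.2]; simp⟩

lemma hs_leadingCoeff_eq {f : HahnSeries ℤ F} (hf : f ≠ 0) :
    f.leadingCoeff = f.coeff f.order := by
  exact leadingCoeff_eq

lemma hs_coeff_pow_zero {f : HahnSeries ℤ F} (hf : f ≠ 0) (ho : f.order = 0) (n : ℕ) :
    (f ^ n).order = 0 ∧ (f ^ n).coeff 0 = (f.coeff 0) ^ n := by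
  induction n with
  | zero => simp [order_one, HahnSeries.coeff_one]
  | succ m ih =>
    have hfm : f ^ m ≠ 0 := pow_ne_zero _ hf
    have horder : (f ^ (m+1)).order = 0 := by rw [hs_order_npow]; simp [ho]
    refine ⟨horder, ?_⟩
    have hmul := coeff_mul_order_add_order (f ^ m) f
    rw [hs_leadingCoeff_eq hfm, hs_leadingCoeff_eq hf, ih.1, ho, add_zero] at hmul
    rw [pow_succ, hmul, ih.2, ← pow_succ]

lemma hs_order_pow_add_one_zero {f : HahnSeries ℤ F} (hf : f ≠ 0) (ho : f.order = 0) (n : ℕ)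
    (hres : (f.coeff 0) ^ n + 1 ≠ 0) :
    (f ^ n + 1).order = 0 ∧ (f ^ n + 1).coeff 0 = (f.coeff 0) ^ n + 1 := by
  obtain ⟨h1, h2⟩ := hs_coeff_pow_zero hf ho n
  have hcoeff : (f ^ n + 1).coeff 0 = (f.coeff 0) ^ n + 1 := by
    simp [HahnSeries.coeff_add, h2, HahnSeries.coeff_one]
  have hne : (f ^ n + 1).coeff 0 ≠ 0 := by rw [hcoeff]; exact hres
  have hfg : f ^ n + 1 ≠ 0 := fun h => hne (by simp [h])
  refine ⟨le_antisymm (by simpa using order_le_of_coeff_ne_zero hne) ?_, hcoeff⟩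
  have h3 := min_order_le_order_add hfg
  rw [h1, order_one] at h3
  simpa using h3

/-- two-step linear recurrence sequence -/
def seqAux (E : ℕ → ℤ) (a0 a1 : ℤ) : ℕ → ℤ × ℤ
  | 0 => (a0, a1)
  | k+1 => ((seqAux E a0 a1 k).2, E k * (seqAux E a0 a1 k).2 - (seqAux E a0 a1 k).1)

def seq (E : ℕ → ℤ) (a0 a1 : ℤ) (k : ℕ) : ℤ := (seqAux E a0 a1 k).1

lemma seq_zero (E a0 a1) : seq E a0 a1 0 = a0 := rfl
lemma seq_one (E a0 a1) : seq E a0 a1 1 = a1 := rfl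
lemma seq_snd (E a0 a1) (k : ℕ) : (seqAux E a0 a1 k).2 = seq E a0 a1 (k+1) := by
  induction k with
  | zero => rfl
  | succ m ih => simp [seq, seqAux]
lemma seq_step (E a0 a1) (k : ℕ) :
    seq E a0 a1 (k+2) = E k * seq E a0 a1 (k+1) - seq E a0 a1 k := by
  have h1 : seq E a0 a1 (k+2) = (seqAux E a0 a1 (k+1)).2 := (seq_snd E a0 a1 (k+1)).symm
  rw [h1]
  show E k * (seqAux E a0 a1 k).2 - (seqAux E a0 a1 k).1 = _
  rw [seq_snd]; rfl

/-- positivity/growth invariant for alternating two-term recurrences -/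
lemma seq_ge (E : ℕ → ℤ) (hEE : ∀ k, 4 ≤ E k * E (k+1)) (hEp : ∀ k, E (k+2) = E k)
    (f : ℕ → ℤ) (hrec : ∀ k, f (k+2) = E k * f (k+1) - f k) (δ : ℤ) (hδ : 0 ≤ δ)
    (h0 : 1 ≤ f 0) (h1 : 1 ≤ f 1) (h2 : 2 * f 0 + δ ≤ E 0 * f 1) (h3 : E 1 * f 0 + δ ≤ 2 * f 1) :
    ∀ k, 1 ≤ f k ∧ 1 ≤ f (k+1) ∧ 2 * f k + δ ≤ E k * f (k+1) ∧ E (k+1) * f k + δ ≤ 2 * f (k+1)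
      ∧ f k + δ ≤ f (k+2) := by
  have key : ∀ k, (1 ≤ f k ∧ 1 ≤ f (k+1) ∧ 2 * f k + δ ≤ E k * f (k+1)
      ∧ E (k+1) * f k + δ ≤ 2 * f (k+1)) := by
    intro k
    induction k with
    | zero => exact ⟨h0, h1, h2, h3⟩
    | succ m ih =>
      obtain ⟨i1, i2, i3, i4⟩ := ih
      have hr := hrec m
      have hee := hEE m
      have hmono : f m + δ ≤ f (m+2) := by omega
      have n1 : 1 ≤ f (m+2) := by omega
      have hh : 4 * f (m+1) ≤ E m * E (m+1) * f (m+1) := by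
        have := mul_le_mul_of_nonneg_right hee (by omega : (0:ℤ) ≤ f (m+1))
        linarith
      have hr2 : E (m+1) * f (m+2) = E m * E (m+1) * f (m+1) - E (m+1) * f m := by
        rw [hr]; ring
      have n2 : 2 * f (m+1) + δ ≤ E (m+1) * f (m+2) := by linarith
      have n3 : E (m+2) * f (m+1) + δ ≤ 2 * f (m+2) := by rw [hEp m]; linarith
      exact ⟨i2, n1, n2, n3⟩
  intro k
  obtain ⟨i1, i2, i3, i4⟩ := key k
  have hr := hrec k
  exact ⟨i1, i2, i3, i4, by omega⟩

lemma seq_chain {f : ℕ → ℤ} (hmono : ∀ k, f k + 1 ≤ f (k+2)) :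
    ∀ k d : ℕ, f k < f (k + 2 * (d + 1)) := by
  intro k d
  induction d with
  | zero =>
    have h2 : k + 2 * (0 + 1) = k + 2 := by ring
    rw [h2]; have := hmono k; omega
  | succ m ih =>
    have h2 := hmono (k + 2 * (m + 1))
    have : k + 2 * (m + 1 + 1) = (k + 2 * (m + 1)) + 2 := by ring
    rw [this]; omega

/-- mod-pattern lemma -/
lemma seq_mod (E f : ℕ → ℤ) (d : ℤ) (ε : ℕ)
    (hrec : ∀ k, f (k+2) = E k * f (k+1) - f k)
    (hE : ∀ k, k % 2 ≠ ε → d ∣ E k)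
    (h0 : (0 % 2 = ε → (d ∣ f 0 - 1 ∨ d ∣ f 0 + 1)) ∧ (0 % 2 ≠ ε → d ∣ f 0))
    (h1 : (1 % 2 = ε → (d ∣ f 1 - 1 ∨ d ∣ f 1 + 1)) ∧ (1 % 2 ≠ ε → d ∣ f 1)) :
    ∀ k, (k % 2 = ε → (d ∣ f k - 1 ∨ d ∣ f k + 1)) ∧ (k % 2 ≠ ε → d ∣ f k) := by
  have key : ∀ k, ((k % 2 = ε → (d ∣ f k - 1 ∨ d ∣ f k + 1)) ∧ (k % 2 ≠ ε → d ∣ f k))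
      ∧ (((k+1) % 2 = ε → (d ∣ f (k+1) - 1 ∨ d ∣ f (k+1) + 1)) ∧ ((k+1) % 2 ≠ ε → d ∣ f (k+1))) := by
    intro k
    induction k with
    | zero => exact ⟨h0, h1⟩
    | succ m ih =>
      refine ⟨ih.2, ?_, ?_⟩
      · intro hm2
        have hm : m % 2 = ε := by omega
        have hdm := (ih.1).1 hm
        have hEd : d ∣ E m * f (m + 1) :=
          Dvd.dvd.mul_left ((ih.2).2 (by omega)) _
        rcases hdm with h | h
        · right
          have he : f (m+1+1) + 1 = E m * f (m+1) - (f m - 1) := by rw [hrec m]; ring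
          rw [he]; exact dvd_sub hEd h
        · left
          have he : f (m+1+1) - 1 = E m * f (m+1) - (f m + 1) := by rw [hrec m]; ring
          rw [he]; exact dvd_sub hEd h
      · intro hm2
        have hm : m % 2 ≠ ε := by omega
        have hdm := (ih.1).2 hm
        have hEd : d ∣ E m * f (m + 1) := Dvd.dvd.mul_right (hE m hm) _
        rw [hrec m]; exact dvd_sub hEd hdm
  intro k; exact (key k).1

end R2


namespace R2

lemma ratX_pow_succ (n : ℕ) (hn : 1 ≤ n) : (RatFunc.X : R2F) ^ n + 1 ≠ 0 := by
  intro h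
  have hX : (RatFunc.X : R2F) = algebraMap (Polynomial ℚ) R2F Polynomial.X :=
    RatFunc.algebraMap_X.symm
  rw [hX, ← map_pow, ← map_one (algebraMap (Polynomial ℚ) R2F), ← map_add] at h
  have h0 : (Polynomial.X ^ n + 1 : Polynomial ℚ) = 0 :=
    IsFractionRing.injective (Polynomial ℚ) R2F (by rw [h, map_zero])
  have h00 : ¬ (0 = n) := by omega
  have hc : (Polynomial.X ^ n + 1 : Polynomial ℚ).coeff 0 = 1 := by
    simp [Polynomial.coeff_X_pow, h00]
  rw [h0] at hc
  simp at hc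

theorem r2tail (b c : ℕ) (hb : 1 ≤ b) (hc : 1 ≤ c) (hbc : 4 ≤ b * c)
    (x : ℤ → R2K) (hne : ∀ i, x i ≠ 0)
    (hodd : ∀ i : ℤ, Odd i → x (i - 1) * x (i + 1) = x i ^ b + 1)
    (heven : ∀ i : ℤ, Even i → x (i - 1) * x (i + 1) = x i ^ c + 1)
    (Φ Ψ : R2K →+* R2L)
    (hΦ1 : Φ (x 1) = HahnSeries.single 1 1) (hΦ2 : Φ (x 2) = HahnSeries.C RatFunc.X)
    (hΨ1 : Ψ (x 1) = HahnSeries.C RatFunc.X) (hΨ2 : Ψ (x 2) = HahnSeries.single 1 1) :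
    ∃ p q : ℕ → ℤ,
      (∀ k : ℕ, (Φ (x ((k:ℤ) + 3))).order = -(p k)) ∧
      (∀ k : ℕ, (Ψ (x ((k:ℤ) + 3))).order = -(q k)) ∧
      (∀ k, 1 ≤ p k) ∧ (∀ k, 0 ≤ q k) ∧
      (∀ k, p k + 1 ≤ p (k + 2)) ∧
      (∀ k, (b:ℤ) * q k + 1 ≤ 2 * p k) ∧
      (∀ k, (k % 2 = 0 → ((b:ℤ) ∣ p k - 1 ∨ (b:ℤ) ∣ p k + 1)) ∧ (k % 2 ≠ 0 → (b:ℤ) ∣ p k)) ∧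
      (∀ k, (k % 2 = 1 → ((c:ℤ) ∣ q k - 1 ∨ (c:ℤ) ∣ q k + 1)) ∧ (k % 2 ≠ 1 → (c:ℤ) ∣ q k)) := by
  have hbz : (1:ℤ) ≤ (b:ℤ) := by exact_mod_cast hb
  have hcz : (1:ℤ) ≤ (c:ℤ) := by exact_mod_cast hc
  have hbcz : (4:ℤ) ≤ (b:ℤ) * (c:ℤ) := by exact_mod_cast hbc
  set E : ℕ → ℤ := fun k => if k % 2 = 0 then (c:ℤ) else (b:ℤ) with hE
  set p : ℕ → ℤ := seq E 1 (b:ℤ) with hpdef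
  set q : ℕ → ℤ := seq E 0 1 with hqdef
  have hEE : ∀ k, 4 ≤ E k * E (k+1) := by
    intro k
    by_cases h : k % 2 = 0
    · have h1 : (k+1) % 2 = 1 := by omega
      simp only [hE, h, h1, if_true]
      norm_num; linarith
    · have h1 : (k+1) % 2 = 0 := by omega
      simp only [hE, h, h1, if_true, if_false]
      norm_num; linarith
  have hEp : ∀ k, E (k+2) = E k := by
    intro k
    have : (k+2) % 2 = k % 2 := by omega
    simp only [hE, this]
  have hE0 : E 0 = (c:ℤ) := by simp [hE]
  have hE1 : E 1 = (b:ℤ) := by simp [hE]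
  have hE2 : E 2 = (c:ℤ) := by simp [hE]
  have hp0 : p 0 = 1 := rfl
  have hp1 : p 1 = (b:ℤ) := rfl
  have hq0 : q 0 = 0 := rfl
  have hq1 : q 1 = 1 := rfl
  have hq2 : q 2 = (c:ℤ) := by
    rw [hqdef, seq_step, seq_zero, seq_one, hE0]; ring
  have hprec : ∀ k, p (k+2) = E k * p (k+1) - p k := fun k => seq_step E 1 (b:ℤ) k
  have hqrec : ∀ k, q (k+2) = E k * q (k+1) - q k := fun k => seq_step E 0 1 k
  -- positivity of p
  have hp := seq_ge E hEE hEp p hprec 1 one_pos.le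
    (by rw [hp0]) (by rw [hp1]; exact hbz)
    (by rw [hp0, hp1, hE0]; linarith)
    (by rw [hp0, hp1, hE1]; linarith)
  have hp1' : ∀ k, 1 ≤ p k := fun k => (hp k).1
  have hpmono : ∀ k, p k + 1 ≤ p (k+2) := fun k => (hp k).2.2.2.2
  -- positivity of q (shifted)
  have hq := seq_ge (fun k => E (k+1)) (fun k => hEE (k+1)) (fun k => hEp (k+1))
    (fun k => q (k+1)) (fun k => hqrec (k+1)) 1 one_pos.le
    (by show (1:ℤ) ≤ q 1; rw [hq1])
    (by show (1:ℤ) ≤ q 2; rw [hq2]; exact hcz)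
    (by show 2 * q 1 + 1 ≤ E 1 * q 2; rw [hq1, hq2, hE1]; linarith)
    (by show E 2 * q 1 + 1 ≤ 2 * q 2; rw [hq1, hq2, hE2]; linarith)
  have hq1' : ∀ k, 1 ≤ q (k+1) := fun k => (hq k).1
  have hqnn : ∀ k, 0 ≤ q k := by
    intro k
    cases k with
    | zero => rw [hq0]
    | succ m => linarith [hq1' m]
  -- separator G
  have hG := seq_ge E hEE hEp (fun k => 2 * p k - (b:ℤ) * q k)
    (by intro k
        show 2 * p (k+2) - (b:ℤ) * q (k+2)
          = E k * (2 * p (k+1) - (b:ℤ) * q (k+1)) - (2 * p k - (b:ℤ) * q k)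
        rw [hprec k, hqrec k]; ring) 0 le_rfl
    (by show (1:ℤ) ≤ 2 * p 0 - (b:ℤ) * q 0; rw [hp0, hq0]; norm_num)
    (by show (1:ℤ) ≤ 2 * p 1 - (b:ℤ) * q 1; rw [hp1, hq1]; linarith)
    (by show 2 * (2 * p 0 - (b:ℤ) * q 0) + 0 ≤ E 0 * (2 * p 1 - (b:ℤ) * q 1)
        rw [hp0, hp1, hq0, hq1, hE0]; ring_nf; linarith)
    (by show E 1 * (2 * p 0 - (b:ℤ) * q 0) + 0 ≤ 2 * (2 * p 1 - (b:ℤ) * q 1)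
        rw [hp0, hp1, hq0, hq1, hE1]; ring_nf; linarith)
  have hsep : ∀ k, (b:ℤ) * q k + 1 ≤ 2 * p k := by
    intro k
    have h := (hG k).1
    have h' : (1:ℤ) ≤ 2 * p k - (b:ℤ) * q k := h
    linarith
  -- mod patterns
  have hpmod := seq_mod E p (b:ℤ) 0 hprec
    (by intro k hk
        have : ¬ (k % 2 = 0) := by omega
        simp only [hE, this, if_false]
        exact dvd_rfl)
    (by constructor
        · intro _; left; rw [hp0]; norm_num
        · intro h; omega)
    (by constructor
        · intro h; omega
        · intro _; rw [hp1])
  have hqmod := seq_mod E q (c:ℤ) 1 hqrec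
    (by intro k hk
        have : k % 2 = 0 := by omega
        simp only [hE, this, if_true]
        exact dvd_rfl)
    (by constructor
        · intro h; omega
        · intro _; rw [hq0]; exact dvd_zero _)
    (by constructor
        · intro _; left; rw [hq1]; norm_num
        · intro h; omega)
  -- nonvanishing of images
  have hΦne : ∀ i : ℤ, Φ (x i) ≠ 0 := by
    intro i h
    exact hne i (Φ.injective (by rw [h, map_zero]))
  have hΨne : ∀ i : ℤ, Ψ (x i) ≠ 0 := by
    intro i h
    exact hne i (Ψ.injective (by rw [h, map_zero]))
  -- basic series facts
  have hXne : (RatFunc.X : R2F) ≠ 0 := RatFunc.X_ne_zero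
  have htne : (HahnSeries.single (1:ℤ) (1:R2F)) ≠ 0 := HahnSeries.single_ne_zero one_ne_zero
  have hto : (HahnSeries.single (1:ℤ) (1:R2F)).order = 1 := HahnSeries.order_single one_ne_zero
  have hCXne : (HahnSeries.C (RatFunc.X : R2F) : R2L) ≠ 0 := HahnSeries.C_ne_zero hXne
  have hCXord : (HahnSeries.C (RatFunc.X : R2F) : R2L).order = 0 := HahnSeries.order_C
  have hCXcoeff : (HahnSeries.C (RatFunc.X : R2F) : R2L).coeff 0 = RatFunc.X := by
    rw [HahnSeries.C_apply, HahnSeries.coeff_single_same]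
  -- base relations
  have hx3 : x 1 * x 3 = x 2 ^ c + 1 := by
    have := heven 2 ⟨1, by norm_num⟩
    rwa [show (2:ℤ) - 1 = 1 by norm_num, show (2:ℤ) + 1 = 3 by norm_num] at this
  have hx4 : x 2 * x 4 = x 3 ^ b + 1 := by
    have := hodd 3 ⟨1, by norm_num⟩
    rwa [show (3:ℤ) - 1 = 2 by norm_num, show (3:ℤ) + 1 = 4 by norm_num] at this
  -- order of Φ (x 3)
  have hΦrel3 : HahnSeries.single (1:ℤ) (1:R2F) * Φ (x 3)
      = (HahnSeries.C (RatFunc.X : R2F))^c + 1 := by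
    rw [← hΦ1, ← hΦ2, ← Φ.map_mul, hx3, Φ.map_add, Φ.map_pow, Φ.map_one]
  have hRHS3 := hs_order_pow_add_one_zero hCXne hCXord c
    (by rw [hCXcoeff]; exact ratX_pow_succ c hc)
  have hordΦ3 : (Φ (x 3)).order = -1 := by
    have hmul := HahnSeries.order_mul htne (hΦne 3)
    rw [hΦrel3, hRHS3.1, hto] at hmul
    omega
  -- order of Ψ (x 3) and residue
  have hΨrel3 : HahnSeries.C (RatFunc.X : R2F) * Ψ (x 3)
      = (HahnSeries.single (1:ℤ) (1:R2F))^c + 1 := by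
    rw [← hΨ1, ← hΨ2, ← Ψ.map_mul, hx3, Ψ.map_add, Ψ.map_pow, Ψ.map_one]
  have hRHS3' := hs_order_pow_add_one_pos htne (by rw [hto]; norm_num) c hc
  have hordΨ3 : (Ψ (x 3)).order = 0 := by
    have hmul := HahnSeries.order_mul hCXne (hΨne 3)
    rw [hΨrel3, hRHS3'.1, hCXord] at hmul
    omega
  have hres3 : RatFunc.X * (Ψ (x 3)).coeff 0 = 1 := by
    have hmul := HahnSeries.coeff_mul_order_add_order
      (HahnSeries.C (RatFunc.X : R2F)) (Ψ (x 3))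
    rw [hCXord, hordΨ3, add_zero, hΨrel3, hRHS3'.2,
      hs_leadingCoeff_eq hCXne, hs_leadingCoeff_eq (hΨne 3), hCXord, hordΨ3, hCXcoeff] at hmul
    exact hmul.symm
  have hres3' : ((Ψ (x 3)).coeff 0)^b + 1 ≠ 0 := by
    intro h
    apply ratX_pow_succ b hb
    have hkey : (RatFunc.X : R2F)^b * (((Ψ (x 3)).coeff 0)^b + 1)
        = 1 + RatFunc.X^b := by
      rw [mul_add, mul_one, ← mul_pow, hres3, one_pow]
    rw [h, mul_zero] at hkey
    linear_combination -hkey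
  -- orders of x 4
  have hΦrel4 : HahnSeries.C (RatFunc.X : R2F) * Φ (x 4) = (Φ (x 3))^b + 1 := by
    rw [← hΦ2, ← Φ.map_mul, hx4, Φ.map_add, Φ.map_pow, Φ.map_one]
  have hordΦ4 : (Φ (x 4)).order = -(b:ℤ) := by
    have hmul := HahnSeries.order_mul hCXne (hΦne 4)
    rw [hΦrel4, hs_order_pow_add_one_neg (hΦne 3) (by rw [hordΦ3]; norm_num) b hb,
      hordΦ3, hCXord] at hmul
    omega
  have hΨrel4 : HahnSeries.single (1:ℤ) (1:R2F) * Ψ (x 4) = (Ψ (x 3))^b + 1 := by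
    rw [← hΨ2, ← Ψ.map_mul, hx4, Ψ.map_add, Ψ.map_pow, Ψ.map_one]
  have hordΨ4 : (Ψ (x 4)).order = -1 := by
    have hmul := HahnSeries.order_mul htne (hΨne 4)
    rw [hΨrel4, (hs_order_pow_add_one_zero (hΨne 3) hordΨ3 b hres3').1, hto] at hmul
    omega
  -- step relations
  have hrelH : ∀ (H : R2K →+* R2L) (m : ℕ),
      H (x ((m:ℤ)+3)) * H (x ((m:ℤ)+5)) = H (x ((m:ℤ)+4)) ^ (if m % 2 = 0 then c else b) + 1 := by
    intro H m
    by_cases hpar : m % 2 = 0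
    · have he : Even ((m:ℤ)+4) := by rw [Int.even_iff]; omega
      have hr := heven _ he
      rw [show ((m:ℤ)+4) - 1 = (m:ℤ)+3 by ring, show ((m:ℤ)+4) + 1 = (m:ℤ)+5 by ring] at hr
      rw [if_pos hpar, ← H.map_mul, hr, H.map_add, H.map_pow, H.map_one]
    · have he : Odd ((m:ℤ)+4) := by rw [Int.odd_iff]; omega
      have hr := hodd _ he
      rw [show ((m:ℤ)+4) - 1 = (m:ℤ)+3 by ring, show ((m:ℤ)+4) + 1 = (m:ℤ)+5 by ring] at hr
      rw [if_neg hpar, ← H.map_mul, hr, H.map_add, H.map_pow, H.map_one]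
  have hEcast : ∀ m : ℕ, ((if m % 2 = 0 then c else b : ℕ) : ℤ) = E m := by
    intro m
    by_cases h : m % 2 = 0 <;> simp [hE, h]
  have hEpos : ∀ m : ℕ, 1 ≤ (if m % 2 = 0 then c else b) := by
    intro m; by_cases h : m % 2 = 0 <;> simp [h, hb, hc]
  -- main induction
  have main : ∀ k : ℕ,
      ((Φ (x ((k:ℤ)+3))).order = -(p k) ∧ (Ψ (x ((k:ℤ)+3))).order = -(q k))
      ∧ ((Φ (x ((k:ℤ)+4))).order = -(p (k+1)) ∧ (Ψ (x ((k:ℤ)+4))).order = -(q (k+1))) := by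
    intro k
    induction k with
    | zero =>
      refine ⟨⟨?_, ?_⟩, ?_, ?_⟩
      · rw [show ((0:ℕ):ℤ)+3 = 3 by norm_num, hordΦ3, hp0]
      · rw [show ((0:ℕ):ℤ)+3 = 3 by norm_num, hordΨ3, hq0]; norm_num
      · rw [show ((0:ℕ):ℤ)+4 = 4 by norm_num, hordΦ4, hp1]
      · rw [show ((0:ℕ):ℤ)+4 = 4 by norm_num, hordΨ4, hq1]
    | succ m ih =>
      have hc1 : ((m+1:ℕ):ℤ)+3 = (m:ℤ)+4 := by push_cast; ring
      have hc2 : ((m+1:ℕ):ℤ)+4 = (m:ℤ)+5 := by push_cast; ring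
      refine ⟨⟨by rw [hc1]; exact ih.2.1, by rw [hc1]; exact ih.2.2⟩, ?_, ?_⟩
      · rw [hc2]
        have hmul := HahnSeries.order_mul (hΦne ((m:ℤ)+3)) (hΦne ((m:ℤ)+5))
        rw [hrelH Φ m,
          hs_order_pow_add_one_neg (hΦne ((m:ℤ)+4))
            (by rw [ih.2.1]; linarith [hp1' (m+1)]) _ (hEpos m),
          ih.2.1, ih.1.1] at hmul
        rw [hEcast m, mul_neg] at hmul
        rw [hprec m]
        omega
      · rw [hc2]
        have hmul := HahnSeries.order_mul (hΨne ((m:ℤ)+3)) (hΨne ((m:ℤ)+5))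
        rw [hrelH Ψ m,
          hs_order_pow_add_one_neg (hΨne ((m:ℤ)+4))
            (by rw [ih.2.2]; linarith [hq1' m]) _ (hEpos m),
          ih.2.2, ih.1.2] at hmul
        rw [hEcast m, mul_neg] at hmul
        rw [hqrec m]
        omega
  exact ⟨p, q, fun k => (main k).1.1, fun k => (main k).1.2, hp1', hqnn, hpmono, hsep,
    hpmod, hqmod⟩

lemma mod_clash {d a : ℤ} (h2 : 2 ≤ d) (h1 : d ∣ a) (hpm : d ∣ a - 1 ∨ d ∣ a + 1) : False := by
  have hd1 : d ∣ 1 := by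
    rcases hpm with h | h
    · have := dvd_sub h1 h
      simpa using this
    · have := dvd_sub h h1
      simpa using this
  have := Int.le_of_dvd one_pos hd1
  omega

lemma seq_chain' {f : ℕ → ℤ} (hmono : ∀ k, f k + 1 ≤ f (k+2)) :
    ∀ k d : ℕ, f k < f (k + 2 * (d + 1)) := by
  intro k d
  induction d with
  | zero =>
    have h2 : k + 2 * (0 + 1) = k + 2 := by ring
    rw [h2]; have := hmono k; omega
  | succ m ih =>
    have h2 := hmono (k + 2 * (m + 1))
    have : k + 2 * (m + 1 + 1) = (k + 2 * (m + 1)) + 2 := by ring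
    rw [this]; omega

lemma tail_distinct (b c : ℕ) (hb : 1 ≤ b) (hc : 1 ≤ c) (hbc : 4 ≤ b * c)
    (p q : ℕ → ℤ) (hpmono : ∀ k, p k + 1 ≤ p (k+2))
    (hpmod : ∀ k, (k % 2 = 0 → ((b:ℤ) ∣ p k - 1 ∨ (b:ℤ) ∣ p k + 1)) ∧ (k % 2 ≠ 0 → (b:ℤ) ∣ p k))
    (hqmod : ∀ k, (k % 2 = 1 → ((c:ℤ) ∣ q k - 1 ∨ (c:ℤ) ∣ q k + 1)) ∧ (k % 2 ≠ 1 → (c:ℤ) ∣ q k)) :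
    ∀ k l, k < l → p k = p l → q k = q l → False := by
  intro k l hkl hpeq hqeq
  by_cases hpar : k % 2 = l % 2
  · obtain ⟨d, hd⟩ : ∃ d, l = k + 2 * (d + 1) := ⟨(l - k) / 2 - 1, by omega⟩
    have := seq_chain' hpmono k d
    rw [← hd] at this
    omega
  · by_cases hb2 : 2 ≤ b
    · -- use p mod b
      have hb2' : (2:ℤ) ≤ (b:ℤ) := by exact_mod_cast hb2
      by_cases hk : k % 2 = 0
      · have hl : l % 2 ≠ 0 := by omega
        have h1 : (b:ℤ) ∣ p k := hpeq ▸ (hpmod l).2 hl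
        exact mod_clash hb2' h1 ((hpmod k).1 hk)
      · have hl : l % 2 = 0 := by omega
        have h1 : (b:ℤ) ∣ p l := hpeq ▸ (hpmod k).2 hk
        exact mod_clash hb2' h1 ((hpmod l).1 hl)
    · -- b = 1, so c ≥ 4 ; use q mod c
      have hc2 : 2 ≤ c := by nlinarith
      have hc2' : (2:ℤ) ≤ (c:ℤ) := by exact_mod_cast hc2
      by_cases hk : k % 2 = 1
      · have hl : l % 2 ≠ 1 := by omega
        have h1 : (c:ℤ) ∣ q k := hqeq ▸ (hqmod l).2 hl
        exact mod_clash hc2' h1 ((hqmod k).1 hk)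
      · have hl : l % 2 = 1 := by omega
        have h1 : (c:ℤ) ∣ q l := hqeq ▸ (hqmod k).2 hk
        exact mod_clash hc2' h1 ((hqmod l).1 hl)

lemma cross_clash (b c : ℕ) (hb : 1 ≤ b) (hc : 1 ≤ c) (hbc : 4 ≤ b * c)
    (P Q : ℤ) (hP : 1 ≤ P) (hQ : 0 ≤ Q)
    (h1 : (b:ℤ) * Q + 1 ≤ 2 * P) (h2 : (c:ℤ) * P + 1 ≤ 2 * Q) : False := by
  have hbz : (1:ℤ) ≤ (b:ℤ) := by exact_mod_cast hb
  have hcz : (1:ℤ) ≤ (c:ℤ) := by exact_mod_cast hc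
  have hbcz : (4:ℤ) ≤ (b:ℤ) * (c:ℤ) := by exact_mod_cast hbc
  nlinarith [mul_le_mul_of_nonneg_left h1 (by linarith : (0:ℤ) ≤ (c:ℤ)),
    mul_le_mul_of_nonneg_right hbcz hQ]

end R2

/-- In the rank-2 cluster algebra with exchange matrix `[[0,b],[-c,0]]` with
`b·c ≥ 4`, realized in the field `ℚ(u,v)` of rational functions in two
variables, the cluster variables `x i` are pairwise distinct (infinite type). -/
theorem rank2_cluster_variables_injective_of_four_le
    (b c : ℕ) (hb : 1 ≤ b) (hc : 1 ≤ c) (hbc : 4 ≤ b * c)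
    (x : ℤ → FractionRing (MvPolynomial (Fin 2) ℚ))
    (hx1 : x 1 = algebraMap (MvPolynomial (Fin 2) ℚ)
      (FractionRing (MvPolynomial (Fin 2) ℚ)) (MvPolynomial.X 0))
    (hx2 : x 2 = algebraMap (MvPolynomial (Fin 2) ℚ)
      (FractionRing (MvPolynomial (Fin 2) ℚ)) (MvPolynomial.X 1))
    (hne : ∀ i : ℤ, x i ≠ 0)
    (hodd : ∀ i : ℤ, Odd i → x (i - 1) * x (i + 1) = x i ^ b + 1)
    (heven : ∀ i : ℤ, Even i → x (i - 1) * x (i + 1) = x i ^ c + 1) :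
    Function.Injective x := by
  classical
  set Φ : R2K →+* R2L := IsFractionRing.lift r2g_inj with hΦdef
  set Ψ : R2K →+* R2L := IsFractionRing.lift r2gs_inj with hΨdef
  have hΦ1 : Φ (x 1) = HahnSeries.single 1 1 := by
    rw [hx1, hΦdef, IsFractionRing.lift_algebraMap]; exact r2g_X0
  have hΦ2 : Φ (x 2) = HahnSeries.C RatFunc.X := by
    rw [hx2, hΦdef, IsFractionRing.lift_algebraMap]; exact r2g_X1
  have hΨ1 : Ψ (x 1) = HahnSeries.C RatFunc.X := by
    rw [hx1, hΨdef, IsFractionRing.lift_algebraMap]; exact r2gs_X0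
  have hΨ2 : Ψ (x 2) = HahnSeries.single 1 1 := by
    rw [hx2, hΨdef, IsFractionRing.lift_algebraMap]; exact r2gs_X1
  obtain ⟨p, q, hRp, hRq, hp1, hq0, hpmono, hsep, hpmod, hqmod⟩ :=
    R2.r2tail b c hb hc hbc x hne hodd heven Φ Ψ hΦ1 hΦ2 hΨ1 hΨ2
  -- the reflected system
  set y : ℤ → R2K := fun i => x (3 - i) with hy
  have hyne : ∀ i, y i ≠ 0 := fun i => hne _
  have hy1 : y 1 = x 2 := congrArg x (by norm_num : (3:ℤ) - 1 = 2)
  have hy2 : y 2 = x 1 := congrArg x (by norm_num : (3:ℤ) - 2 = 1)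
  have hyodd : ∀ i : ℤ, Odd i → y (i - 1) * y (i + 1) = y i ^ c + 1 := by
    intro i hi
    have he : Even (3 - i) := by
      rcases hi with ⟨m, hm⟩; exact ⟨1 - m, by omega⟩
    have hr := heven (3 - i) he
    have e1 : (3:ℤ) - i - 1 = 3 - (i + 1) := by ring
    have e2 : (3:ℤ) - i + 1 = 3 - (i - 1) := by ring
    rw [e1, e2] at hr
    show x (3 - (i - 1)) * x (3 - (i + 1)) = x (3 - i) ^ c + 1
    rw [mul_comm]; exact hr
  have hyeven : ∀ i : ℤ, Even i → y (i - 1) * y (i + 1) = y i ^ b + 1 := by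
    intro i hi
    have ho : Odd (3 - i) := by
      rcases hi with ⟨m, hm⟩; exact ⟨1 - m, by omega⟩
    have hr := hodd (3 - i) ho
    have e1 : (3:ℤ) - i - 1 = 3 - (i + 1) := by ring
    have e2 : (3:ℤ) - i + 1 = 3 - (i - 1) := by ring
    rw [e1, e2] at hr
    show x (3 - (i - 1)) * x (3 - (i + 1)) = x (3 - i) ^ b + 1
    rw [mul_comm]; exact hr
  obtain ⟨p', q', hLp, hLq, hp1', hq0', hpmono', hsep', hpmod', hqmod'⟩ :=
    R2.r2tail c b hc hb (by rwa [Nat.mul_comm]) y hyne hyodd hyeven Ψ Φ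
      (by rw [hy1]; exact hΨ2) (by rw [hy2]; exact hΨ1)
      (by rw [hy1]; exact hΦ2) (by rw [hy2]; exact hΦ1)
  -- region descriptions of the orders
  have hR : ∀ n : ℤ, 3 ≤ n →
      (Φ (x n)).order = -(p ((n-3).toNat)) ∧ (Ψ (x n)).order = -(q ((n-3).toNat)) := by
    intro n hn
    have hcast : (((n-3).toNat : ℤ)) + 3 = n := by omega
    exact ⟨by have := hRp ((n-3).toNat); rwa [hcast] at this,
      by have := hRq ((n-3).toNat); rwa [hcast] at this⟩
  have hL : ∀ n : ℤ, n ≤ 0 →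
      (Ψ (x n)).order = -(p' ((-n).toNat)) ∧ (Φ (x n)).order = -(q' ((-n).toNat)) := by
    intro n hn
    have hcast : (3:ℤ) - (((-n).toNat : ℤ) + 3) = n := by omega
    have h2 : y (((-n).toNat : ℤ) + 3) = x n := by
      show x (3 - (((-n).toNat : ℤ) + 3)) = x n
      exact congrArg x hcast
    exact ⟨by have := hLp ((-n).toNat); rwa [h2] at this,
      by have := hLq ((-n).toNat); rwa [h2] at this⟩
  have hordΦ1 : (Φ (x 1)).order = 1 := by
    rw [hΦ1]; exact HahnSeries.order_single one_ne_zero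
  have hordΦ2 : (Φ (x 2)).order = 0 := by rw [hΦ2]; exact HahnSeries.order_C
  have hordΨ1 : (Ψ (x 1)).order = 0 := by rw [hΨ1]; exact HahnSeries.order_C
  have hordΨ2 : (Ψ (x 2)).order = 1 := by
    rw [hΨ2]; exact HahnSeries.order_single one_ne_zero
  -- the key pairwise-distinctness claim
  have key : ∀ i j : ℤ, i < j → x i = x j → False := by
    intro i j hij heq
    have hΦeq : (Φ (x i)).order = (Φ (x j)).order := by rw [heq]
    have hΨeq : (Ψ (x i)).order = (Ψ (x j)).order := by rw [heq]
    have hi4 : i ≤ 0 ∨ i = 1 ∨ i = 2 ∨ 3 ≤ i := by omega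
    have hj4 : j ≤ 0 ∨ j = 1 ∨ j = 2 ∨ 3 ≤ j := by omega
    rcases hi4 with hi | hi | hi | hi <;> rcases hj4 with hj | hj | hj | hj
    -- i ≤ 0, j ≤ 0
    · have h1 := (hL i hi).1
      have h2 := (hL j hj).1
      have h3 := (hL i hi).2
      have h4 := (hL j hj).2
      refine R2.tail_distinct c b hc hb (by rwa [Nat.mul_comm]) p' q' hpmono' hpmod' hqmod'
        ((-j).toNat) ((-i).toNat) (by omega) (by omega) (by omega)
    -- i ≤ 0, j = 1
    · subst hj
      have h1 := (hL i hi).1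
      have := hp1' ((-i).toNat)
      rw [hordΨ1] at hΨeq
      omega
    -- i ≤ 0, j = 2
    · subst hj
      have h1 := (hL i hi).1
      have := hp1' ((-i).toNat)
      rw [hordΨ2] at hΨeq
      omega
    -- i ≤ 0, 3 ≤ j
    · have h1 := (hL i hi).1
      have h2 := (hL i hi).2
      have h3 := (hR j hj).1
      have h4 := (hR j hj).2
      have e1 : q' ((-i).toNat) = p ((j-3).toNat) := by omega
      have e2 : p' ((-i).toNat) = q ((j-3).toNat) := by omega
      refine R2.cross_clash b c hb hc hbc (p ((j-3).toNat)) (q ((j-3).toNat))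
        (hp1 _) (hq0 _) (hsep _) ?_
      have := hsep' ((-i).toNat)
      rw [e1, e2] at this
      exact this
    · omega
    · omega
    -- i = 1, j = 2
    · subst hi; subst hj
      rw [hordΦ1, hordΦ2] at hΦeq
      omega
    -- i = 1, 3 ≤ j
    · subst hi
      have h3 := (hR j hj).1
      have := hp1 ((j-3).toNat)
      rw [hordΦ1] at hΦeq
      omega
    · omega
    · omega
    · omega
    -- i = 2, 3 ≤ j
    · subst hi
      have h3 := (hR j hj).1
      have := hp1 ((j-3).toNat)
      rw [hordΦ2] at hΦeq
      omega
    · omega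
    · omega
    · omega
    -- 3 ≤ i, 3 ≤ j
    · have h1 := (hR i hi).1
      have h2 := (hR i hi).2
      have h3 := (hR j hj).1
      have h4 := (hR j hj).2
      refine R2.tail_distinct b c hb hc hbc p q hpmono hpmod hqmod
        ((i-3).toNat) ((j-3).toNat) (by omega) (by omega) (by omega)
  intro i j h
  by_contra hne2
  rcases lt_or_gt_of_ne hne2 with h' | h'
  · exact key i j h' h
  · exact key j i h' h.symm

end Rank2Aux
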